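/- Let β ∈ (1,2) and m ≥ 1. Suppose the trapezoidal map T_β has a periodic point x of smallest period m whose entire orbit {x, T_β(x), …, T_β^{m−1}(x)} is disjoint from C = [1/β, 1/(β(β−1))]. Then for every k with m ▷ k in the Sharkovskii ordering, T_β has a periodic point of smallest period k whose entire orbit is disjoint from C. -/

import Mathlib

/-- A 0-1 sequence: all values are at most 1. Index `k` corresponds to `ε_{k+1}` in the paper. -/
def isSeq (ε : ℕ → ℕ) : Prop := ∀ k, ε k ≤ 1

/-- The shift map σ. -/
def shift (ε : ℕ → ℕ) : ℕ → ℕ := fun n => ε (n + 1)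

/-- The mirror image ε̄, (ε̄)_n = 1 - ε_n. -/
def mirror (ε : ℕ → ℕ) : ℕ → ℕ := fun n => 1 - ε n

/-- Strict lexicographic order on sequences. -/
def lexLt (a b : ℕ → ℕ) : Prop := ∃ k, (∀ j, j < k → a j = b j) ∧ a k < b k

/-- Non-strict lexicographic order. -/
def lexLe (a b : ℕ → ℕ) : Prop := lexLt a b ∨ a = b

/-- ε is periodic with smallest period n ≥ 1. -/
def periodicSmallest (n : ℕ) (ε : ℕ → ℕ) : Prop :=
  1 ≤ n ∧ shift^[n] ε = ε ∧ ∀ j, 1 ≤ j → j < n → shift^[j] ε ≠ ε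

/-- k ▷ m in the Sharkovskii ordering: k comes before m. -/
def sharkGt (k m : ℕ) : Prop :=
  ∃ i p j q : ℕ, k = 2 ^ i * (2 * p + 1) ∧ m = 2 ^ j * (2 * q + 1) ∧
    ((1 ≤ p ∧ 1 ≤ q ∧ i < j) ∨ (1 ≤ p ∧ 1 ≤ q ∧ i = j ∧ p < q) ∨
     (1 ≤ p ∧ q = 0) ∨ (p = 0 ∧ q = 0 ∧ j < i))

/-- The interval I_β = [0, 1/(β-1)]. -/
def Iset (β : ℝ) : Set ℝ := Set.Icc 0 (1 / (β - 1))

/-- The trapezoidal map T_β. -/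
noncomputable def Tmap (β : ℝ) : ℝ → ℝ := fun x =>
  if x < 1 / β then β * x
  else if x ≤ 1 / (β * (β - 1)) then 1
  else β / (β - 1) - β * x

/-- The middle interval C = [1/β, 1/(β(β-1))]. -/
def Cset (β : ℝ) : Set ℝ := Set.Icc (1 / β) (1 / (β * (β - 1)))


namespace Stmt18

def S (e : ℕ → Bool) (n : ℕ) : ℕ → Bool := fun j => e (n + j)

@[simp] lemma S_apply (e : ℕ → Bool) (n j : ℕ) : S e n j = e (n + j) := rfl

lemma S_zero (e : ℕ → Bool) : S e 0 = e := by funext j; simp [S]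

lemma S_S (e : ℕ → Bool) (n a : ℕ) : S (S e n) a = S e (n + a) := by
  funext j; simp [S, Nat.add_assoc]

def ones (e : ℕ → Bool) (t : ℕ) : ℕ := ∑ i ∈ Finset.range t, (if e i then 1 else 0)

lemma ones_zero (e : ℕ → Bool) : ones e 0 = 0 := by simp [ones]

lemma ones_succ (e : ℕ → Bool) (t : ℕ) :
    ones e (t + 1) = ones e t + (if e t then 1 else 0) := by
  unfold ones; rw [Finset.sum_range_succ]

lemma ones_le (e : ℕ → Bool) (t : ℕ) : ones e t ≤ t := by
  induction t with
  | zero => simp [ones]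
  | succ t ih => rw [ones_succ]; split <;> omega

lemma ones_congr {a b : ℕ → Bool} {t : ℕ} (h : ∀ s, s < t → a s = b s) :
    ones a t = ones b t := by
  unfold ones
  exact Finset.sum_congr rfl (fun i hi => by rw [h i (Finset.mem_range.1 hi)])

lemma ones_shift (e : ℕ → Bool) (t : ℕ) :
    ones e (t + 1) = (if e 0 then 1 else 0) + ones (S e 1) t := by
  unfold ones
  rw [Finset.sum_range_succ']
  simp only [S_apply]
  rw [Nat.add_comm]
  congr 1
  exact Finset.sum_congr rfl (fun i _ => by simp [Nat.add_comm])

def tlt (a b : ℕ → Bool) : Prop :=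
  ∃ t, (∀ s, s < t → a s = b s) ∧ a t ≠ b t ∧ (a t = true ↔ Odd (ones a t))

def tle (a b : ℕ → Bool) : Prop := tlt a b ∨ a = b

lemma tle_refl (a : ℕ → Bool) : tle a a := Or.inr rfl

lemma tlt_total {a b : ℕ → Bool} (h : a ≠ b) : tlt a b ∨ tlt b a := by
  classical
  have hex : ∃ t, a t ≠ b t := by
    by_contra hc
    push_neg at hc
    exact h (funext hc)
  set t := Nat.find hex with htdef
  have hdiff : a t ≠ b t := Nat.find_spec hex
  have hagree : ∀ s, s < t → a s = b s := by
    intro s hs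
    by_contra hc
    have hle : t ≤ s := Nat.find_le hc
    omega
  have hagree' : ∀ s, s < t → b s = a s := fun s hs => (hagree s hs).symm
  have hdiff' : b t ≠ a t := fun hh => hdiff hh.symm
  have hones : ones a t = ones b t := ones_congr hagree
  by_cases hodd : Odd (ones a t)
  · cases hA : a t
    · have hB : b t = true := by
        cases hB : b t
        · exact absurd (hA.trans hB.symm) hdiff
        · rfl
      exact Or.inr ⟨t, hagree', hdiff', by rw [hB, ← hones]; simpa using hodd⟩
    · exact Or.inl ⟨t, hagree, hdiff, by rw [hA]; simpa using hodd⟩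
  · cases hA : a t
    · exact Or.inl ⟨t, hagree, hdiff, by rw [hA]; simpa using hodd⟩
    · have hB : b t = false := by
        cases hB : b t
        · rfl
        · exact absurd (hA.trans hB.symm) hdiff
      exact Or.inr ⟨t, hagree', hdiff', by rw [hB, ← hones]; simpa using hodd⟩

/-- the witness in a tlt proof is the least difference position -/
lemma tlt_witness_least {a b : ℕ → Bool} {t t' : ℕ}
    (h : (∀ s, s < t → a s = b s) ∧ a t ≠ b t)
    (h' : (∀ s, s < t' → a s = b s) ∧ a t' ≠ b t') : t = t' := by
  rcases lt_trichotomy t t' with hlt | heq | hgt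
  · exact absurd (h'.1 t hlt) h.2
  · exact heq
  · exact absurd (h.1 t' hgt) h'.2

lemma tlt_asymm {a b : ℕ → Bool} (h : tlt a b) (h' : tlt b a) : False := by
  obtain ⟨t, hag, hd, hc⟩ := h
  obtain ⟨t', hag', hd', hc'⟩ := h'
  have : t = t' := tlt_witness_least ⟨hag, hd⟩ ⟨fun s hs => (hag' s hs).symm, fun hh => hd' hh.symm⟩
  subst this
  have hones : ones a t = ones b t := ones_congr hag
  rw [hones] at hc
  cases hA : a t <;> cases hB : b t <;> simp_all [Nat.odd_iff, Nat.even_iff]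

lemma tlt_irrefl (a : ℕ → Bool) : ¬ tlt a a := fun h => tlt_asymm h h

lemma tlt_trans {a b c : ℕ → Bool} (h : tlt a b) (h' : tlt b c) : tlt a c := by
  obtain ⟨t, hag, hd, hc⟩ := h
  obtain ⟨t', hag', hd', hc'⟩ := h'
  rcases lt_trichotomy t t' with hlt | heq | hgt
  · exact ⟨t, fun s hs => (hag s hs).trans (hag' s (hs.trans hlt)),
      by rw [← hag' t hlt]; exact hd, hc⟩
  · subst heq
    exfalso
    have hones : ones a t = ones b t := ones_congr hag
    rw [hones] at hc
    cases hA : a t <;> cases hB : b t <;> simp_all [Nat.odd_iff, Nat.even_iff]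
  · refine ⟨t', fun s hs => (hag s (hs.trans hgt)).trans (hag' s hs), ?_, ?_⟩
    · rw [hag t' hgt]; exact hd'
    · rw [hag t' hgt, ones_congr (fun s hs => hag s (hs.trans hgt))]; exact hc'

lemma tle_trans {a b c : ℕ → Bool} (h : tle a b) (h' : tle b c) : tle a c := by
  rcases h with h | rfl
  · rcases h' with h' | rfl
    · exact Or.inl (tlt_trans h h')
    · exact Or.inl h
  · exact h'

lemma tlt_tle_trans {a b c : ℕ → Bool} (h : tlt a b) (h' : tle b c) : tlt a c := by
  rcases h' with h' | rfl
  · exact tlt_trans h h'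
  · exact h

lemma tle_tlt_trans {a b c : ℕ → Bool} (h : tle a b) (h' : tlt b c) : tlt a c := by
  rcases h with h | rfl
  · exact tlt_trans h h'
  · exact h'

end Stmt18

namespace Stmt18

/-! ### Periodicity -/

def Per (r : ℕ) (e : ℕ → Bool) : Prop := ∀ n, e (n + r) = e n

def Lp (r : ℕ) (e : ℕ → Bool) : Prop :=
  0 < r ∧ Per r e ∧ ∀ s, 0 < s → s < r → ¬ Per s e

lemma Per.mul {r : ℕ} {e : ℕ → Bool} (h : Per r e) (c : ℕ) : ∀ n, e (n + c * r) = e n := by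
  intro n
  induction c with
  | zero => simp
  | succ c ih =>
    have : n + (c + 1) * r = (n + c * r) + r := by ring
    rw [this, h (n + c * r), ih]

lemma Per.S {r : ℕ} {e : ℕ → Bool} (h : Per r e) (n : ℕ) : Per r (S e n) := by
  intro j; simp only [S_apply]
  have : n + (j + r) = (n + j) + r := by ring
  rw [this, h]

lemma per_S_of_per {r : ℕ} {e : ℕ → Bool} (h : Per r e) (c : ℕ) :
    S e (c * r) = e := by
  funext j
  simp only [S_apply]
  rw [Nat.add_comm]
  exact h.mul c j

/-! ### The doubling operator -/

def Dd (e : ℕ → Bool) : ℕ → Bool := fun n => if n % 2 = 0 then true else !e (n / 2)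

lemma Dd_even (e : ℕ → Bool) (j : ℕ) : Dd e (2 * j) = true := by
  simp [Dd, Nat.mul_mod_right]

lemma Dd_odd (e : ℕ → Bool) (j : ℕ) : Dd e (2 * j + 1) = !e j := by
  have h1 : (2 * j + 1) % 2 = 1 := by omega
  have h2 : (2 * j + 1) / 2 = j := by omega
  simp [Dd, h1, h2]

lemma Dd_inj {a b : ℕ → Bool} (h : Dd a = Dd b) : a = b := by
  funext n
  have := congrFun h (2 * n + 1)
  rw [Dd_odd, Dd_odd] at this
  simpa using this

lemma S_Dd (e : ℕ → Bool) (n : ℕ) : S (Dd e) (2 * n) = Dd (S e n) := by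
  funext j
  rcases Nat.even_or_odd j with ⟨u, hu⟩ | ⟨u, hu⟩
  · subst hu
    have h1 : 2 * n + (u + u) = 2 * (n + u) := by ring
    have h2 : u + u = 2 * u := by ring
    simp only [S_apply]
    rw [h1, h2, Dd_even, Dd_even]
  · subst hu
    have h1 : 2 * n + (2 * u + 1) = 2 * (n + u) + 1 := by ring
    simp only [S_apply]
    rw [h1, Dd_odd, Dd_odd]
    simp [S]

lemma ones_Dd_even (e : ℕ → Bool) (t : ℕ) : ones (Dd e) (2 * t) + ones e t = 2 * t := by
  induction t with
  | zero => simp [ones_zero]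
  | succ t ih =>
    have h1 : 2 * (t + 1) = (2 * t + 1) + 1 := by ring
    rw [h1, ones_succ, ones_succ, ones_succ]
    have h2 : (2 * t + 1) = 2 * t + 1 := rfl
    rw [Dd_odd]
    have h3 : Dd e (2 * t) = true := Dd_even e t
    rw [h3]
    cases he : e t <;> simp [he] at * <;> omega

lemma ones_Dd_odd (e : ℕ → Bool) (t : ℕ) : ones (Dd e) (2 * t + 1) + ones e t = 2 * t + 1 := by
  have := ones_Dd_even e t
  rw [ones_succ, Dd_even]
  simp
  omega

/-! ### order transfer under doubling -/

lemma tlt_Dd_of_tlt {a b : ℕ → Bool} (h : tlt a b) : tlt (Dd a) (Dd b) := by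
  obtain ⟨t, hag, hd, hc⟩ := h
  refine ⟨2 * t + 1, ?_, ?_, ?_⟩
  · intro s hs
    rcases Nat.even_or_odd s with ⟨u, hu⟩ | ⟨u, hu⟩
    · have hu2 : s = 2 * u := by omega
      subst hu2
      rw [Dd_even, Dd_even]
    · have hu2 : s = 2 * u + 1 := by omega
      subst hu2
      rw [Dd_odd, Dd_odd, hag u (by omega)]
  · rw [Dd_odd, Dd_odd]
    cases hA : a t <;> cases hB : b t <;> simp_all
  · rw [Dd_odd]
    have hone := ones_Dd_odd a t
    have hle := ones_le a t
    constructor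
    · intro hna
      have ha : a t = false := by cases hA : a t <;> simp_all
      rw [ha] at hc; simp at hc
      rw [Nat.odd_iff] at *
      rw [Nat.even_iff] at hc
      omega
    · intro hodd
      cases hA : a t
      · rfl
      · exfalso
        have : Odd (ones a t) := hc.mp hA
        rw [Nat.odd_iff] at *
        omega

lemma tlt_Dd_iff {a b : ℕ → Bool} : tlt (Dd a) (Dd b) ↔ tlt a b := by
  constructor
  · intro h
    have hne : a ≠ b := by
      rintro rfl
      exact tlt_irrefl _ h
    rcases tlt_total hne with h' | h'
    · exact h'
    · exact absurd (tlt_Dd_of_tlt h') (fun hh => tlt_asymm h hh)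
  · exact tlt_Dd_of_tlt

lemma tle_Dd_iff {a b : ℕ → Bool} : tle (Dd a) (Dd b) ↔ tle a b := by
  unfold tle
  constructor
  · rintro (h | h)
    · exact Or.inl (tlt_Dd_iff.mp h)
    · exact Or.inr (Dd_inj h)
  · rintro (h | rfl)
    · exact Or.inl (tlt_Dd_of_tlt h)
    · exact Or.inr rfl

/-- head lemma : if w starts (true, false) then any sequence starting with false,
or with (true, true), is tlt w -/
lemma head_tlt {w a : ℕ → Bool} (hw0 : w 0 = true) (hw1 : w 1 = false)
    (ha : a 0 = false ∨ (a 0 = true ∧ a 1 = true)) : tlt a w := by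
  rcases ha with ha | ⟨ha0, ha1⟩
  · exact ⟨0, by omega, by rw [ha, hw0]; simp, by rw [ha, ones_zero]; simp⟩
  · refine ⟨1, ?_, by rw [ha1, hw1]; simp, ?_⟩
    · intro s hs
      have : s = 0 := by omega
      rw [this, ha0, hw0]
    · rw [ha1, ones_succ, ones_zero, ha0]
      simp

end Stmt18

namespace Stmt18

lemma not_tlt_of_tle {a b : ℕ → Bool} (h : tle a b) : ¬ tlt b a := by
  rintro h'
  rcases h with h | rfl
  · exact tlt_asymm h h'
  · exact tlt_irrefl _ h'

/-! ### Stefan sequences -/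

def St (N : ℕ) : ℕ → Bool := fun n => decide (n % N ≠ 1)

lemma St_eq_true {N n : ℕ} (h : n % N ≠ 1) : St N n = true := by simp [St, h]

lemma St_eq_false {N n : ℕ} (h : n % N = 1) : St N n = false := by simp [St, h]

lemma St_one (n : ℕ) : St 1 n = true := St_eq_true (by omega)

lemma St_zero_eq {N : ℕ} (hN : 2 ≤ N) : St N 0 = true := St_eq_true (by simp)

lemma St_one_eq {N : ℕ} (hN : 2 ≤ N) : St N 1 = false := St_eq_false (Nat.mod_eq_of_lt hN)

lemma St_mid_eq {N t : ℕ} (h2 : 2 ≤ t) (hN : t ≤ N) : St N t = true := by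
  apply St_eq_true
  rcases eq_or_lt_of_le hN with rfl | hlt
  · simp [Nat.mod_self]
  · rw [Nat.mod_eq_of_lt hlt]; omega

lemma St_N1_eq {N : ℕ} (hN : 2 ≤ N) : St N (N + 1) = false := by
  apply St_eq_false
  have : N + 1 = 1 + 1 * N := by ring
  rw [this, Nat.add_mul_mod_self_right]
  exact Nat.mod_eq_of_lt (by omega)

/-- counting ones for sequences of the shape 1 0 1 1 1 ... -/
lemma ones_headpattern {c : ℕ → Bool} {p : ℕ} (h0 : c 0 = true) (h1 : c 1 = false)
    (hmid : ∀ s, 2 ≤ s → s < p → c s = true) (hp : 2 ≤ p) : ones c p = p - 1 := by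
  induction p, hp using Nat.le_induction with
  | base =>
    have : (2 : ℕ) = 1 + 1 := rfl
    rw [this, ones_succ, ones_succ, ones_zero, h0, h1]
    simp
  | succ p hp ih =>
    rw [ones_succ, ih (fun s h2 hs => hmid s h2 (by omega)), hmid p (by omega) (by omega)]
    simp
    omega

lemma ones_St {N t : ℕ} (hN : 2 ≤ N) (h2 : 2 ≤ t) (ht : t ≤ N + 1) :
    ones (St N) t = t - 1 :=
  ones_headpattern (St_zero_eq hN) (St_one_eq hN)
    (fun s hs2 hsp => St_mid_eq hs2 (by omega)) h2

lemma Per_St (N : ℕ) : Per N (St N) := by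
  intro n; simp [St, Nat.add_mod_right]

lemma Lp_St {N : ℕ} (hN : 1 ≤ N) : Lp N (St N) := by
  refine ⟨hN, Per_St N, ?_⟩
  intro s hs0 hsN hPer
  have hN2 : 2 ≤ N := by omega
  have h1 : St N (1 + s) = St N 1 := hPer 1
  rw [St_one_eq hN2] at h1
  have : St N (1 + s) = true := by
    rcases eq_or_lt_of_le (show 1 + s ≤ N by omega) with heq | hlt
    · rw [heq]; exact St_mid_eq hN2 le_rfl
    · exact St_mid_eq (by omega) (by omega)
  rw [this] at h1
  simp at h1

lemma tlt_head0 {a b : ℕ → Bool} (ha : a 0 = false) (hb : b 0 = true) : tlt a b :=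
  ⟨0, by omega, by rw [ha, hb]; simp, by rw [ha, ones_zero]; simp⟩

lemma shiftmax_St {N : ℕ} (hN : 2 ≤ N) (n : ℕ) : tle (S (St N) n) (St N) := by
  have hSmod : S (St N) n = S (St N) (n % N) := by
    funext j
    simp only [S_apply, St]
    congr 1
    rw [Nat.mod_add_mod]
  rw [hSmod]
  set r := n % N with hrdef
  have hr : r < N := Nat.mod_lt n (by omega)
  rcases Nat.lt_or_ge r 2 with hr2 | hr2
  · interval_cases r
    · rw [S_zero]; exact tle_refl _
    · exact Or.inl (tlt_head0 (by simp [St_one_eq hN]) (St_zero_eq hN))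
  · refine Or.inl (head_tlt (St_zero_eq hN) (St_one_eq hN) (Or.inr ⟨?_, ?_⟩))
    · simpa using St_mid_eq hr2 (le_of_lt hr)
    · have : r + 1 ≤ N := hr
      simpa using St_mid_eq (show 2 ≤ r + 1 by omega) this

end Stmt18

namespace Stmt18

/-- SM1 : a shift-maximal sequence of least period ≥ 2 starts with (true, false). -/
lemma SM1 {ν : ℕ → Bool} {m : ℕ} (hsm : ∀ n, tle (S ν n) ν) (hLp : Lp m ν) (hm : 2 ≤ m) :
    ν 0 = true ∧ ν 1 = false := by
  classical
  have hnotper : ¬ Per 1 ν := hLp.2.2 1 (by omega) (by omega)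
  have h0 : ν 0 = true := by
    by_contra h0
    have h0' : ν 0 = false := by cases h : ν 0 <;> simp_all
    have hex : ∃ w, ν w = true := by
      by_contra hc
      push_neg at hc
      have hall : ∀ w, ν w = false := by
        intro w; cases h : ν w
        · rfl
        · exact absurd h (hc w)
      exact hnotper (fun n => by rw [hall, hall])
    obtain ⟨w, hw⟩ := hex
    have : tlt ν (S ν w) := tlt_head0 h0' (by simpa using hw)
    exact not_tlt_of_tle (hsm w) this
  refine ⟨h0, ?_⟩
  have hex : ∃ w, ν w = false := by
    by_contra hc
    push_neg at hc
    have hall : ∀ w, ν w = true := by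
      intro w; cases h : ν w
      · exact absurd h (hc w)
      · rfl
    exact hnotper (fun n => by rw [hall, hall])
  set a := Nat.find hex with hadef
  have haf : ν a = false := Nat.find_spec hex
  have hminv : ∀ s, s < a → ν s = true := by
    intro s hs
    by_contra hcc
    have hsf : ν s = false := by cases h : ν s <;> simp_all
    have : a ≤ s := Nat.find_le hsf
    omega
  have ha1 : 1 ≤ a := by
    rcases Nat.eq_zero_or_pos a with h | h
    · rw [h] at haf; rw [h0] at haf; simp at haf
    · exact h
  rcases eq_or_lt_of_le ha1 with heq | hgt
  · rw [heq]; exact haf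
  · exfalso
    have hu : tlt ν (S ν (a - 1)) := by
      refine ⟨1, ?_, ?_, ?_⟩
      · intro s hs
        have : s = 0 := by omega
        subst this
        simp only [S_apply]
        rw [h0, Nat.add_zero, hminv (a-1) (by omega)]
      · simp only [S_apply]
        have h11 : a - 1 + 1 = a := by omega
        rw [h11, haf, hminv 1 hgt]
        simp
      · rw [hminv 1 hgt, ones_succ, ones_zero, h0]
        simp
    exact not_tlt_of_tle (hsm (a-1)) hu

/-- all-true sequence is below any sequence starting (true, false) -/
lemma tlt_allTrue {ν : ℕ → Bool} (h0 : ν 0 = true) (h1 : ν 1 = false) :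
    tlt (St 1) ν :=
  head_tlt h0 h1 (Or.inr ⟨St_one 0, St_one 1⟩)

/-- O1 : any doubled sequence is below any Stefan sequence of odd length ≥ 3. -/
lemma tlt_Dd_St (e : ℕ → Bool) {N : ℕ} (hodd : Odd N) (hN : 3 ≤ N) :
    tlt (Dd e) (St N) := by
  classical
  have hN2 : 2 ≤ N := by omega
  obtain ⟨c, hc⟩ := hodd
  have hwit : Dd e (N + 1) ≠ St N (N + 1) := by
    have h1 : Dd e (N+1) = true := by
      rw [show N + 1 = 2 * (c+1) by omega, Dd_even]
    have h2 : St N (N+1) = false := St_N1_eq hN2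
    rw [h1, h2]; simp
  have hex : ∃ s, Dd e s ≠ St N s := ⟨N+1, hwit⟩
  set d := Nat.find hex with hddef
  have hd : Dd e d ≠ St N d := Nat.find_spec hex
  have hag : ∀ s, s < d → Dd e s = St N s := by
    intro s hs
    by_contra hcc
    have : d ≤ s := Nat.find_le hcc
    omega
  have hdle : d ≤ N + 1 := Nat.find_le hwit
  have honeseq : ones (Dd e) d = ones (St N) d := ones_congr hag
  refine ⟨d, hag, hd, ?_⟩
  rcases Nat.even_or_odd d with ⟨u, hu⟩ | ⟨u, hu⟩
  · -- d even : forced d = N+1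
    have hDt : Dd e d = true := by rw [show d = 2*u by omega, Dd_even]
    have hStf : St N d = false := by
      cases h : St N d
      · rfl
      · exact absurd (hDt.trans h.symm) hd
    have hmod : d % N = 1 := by
      by_contra hmm
      rw [St_eq_true hmm] at hStf
      simp at hStf
    have hdN1 : d = N + 1 := by
      rcases Nat.lt_or_ge d N with hlt | hge
      · rw [Nat.mod_eq_of_lt hlt] at hmod
        omega
      · rcases eq_or_lt_of_le hge with heq | hlt2
        · rw [← heq, Nat.mod_self] at hmod; omega
        · omega
    rw [hDt, honeseq, hdN1, ones_St hN2 (by omega) le_rfl]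
    simp only [true_iff]
    have : N + 1 - 1 = N := by omega
    rw [this]
    exact ⟨c, hc⟩
  · -- d odd
    rcases Nat.lt_or_ge d 2 with hd2 | hd2
    · -- d = 1
      have hd1 : d = 1 := by omega
      have hStf : St N d = false := by rw [hd1]; exact St_one_eq hN2
      have hDt : Dd e d = true := by
        cases h : Dd e d
        · exact absurd (h.trans hStf.symm) hd
        · rfl
      rw [hDt, honeseq, hd1, ones_succ, ones_zero, St_zero_eq hN2]
      simp
    · -- 3 ≤ d ≤ N
      have hdN : d ≤ N := by omega
      have hStt : St N d = true := St_mid_eq hd2 hdN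
      have hDf : Dd e d = false := by
        cases h : Dd e d
        · rfl
        · exact absurd (h.trans hStt.symm) hd
      rw [hDf, honeseq, ones_St hN2 hd2 (by omega)]
      constructor
      · intro h; simp at h
      · intro h
        exfalso
        rw [Nat.odd_iff] at h
        omega

end Stmt18

namespace Stmt18

/-- O4 : a shift-maximal sequence with least period m ≥ 2 that has a `false` in an even
position dominates every Stefan sequence of odd length N ≥ m+1. -/
lemma O4 {ν : ℕ → Bool} {m : ℕ} (hsm : ∀ n, tle (S ν n) ν) (hLp : Lp m ν) (hm : 2 ≤ m)
    {w0 : ℕ} (hni : ν (2 * w0) = false) {N : ℕ} (hNodd : Odd N) (hNm : m + 1 ≤ N) :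
    tlt (St N) ν := by
  classical
  obtain ⟨h0, h1⟩ := SM1 hsm hLp hm
  have hPer : Per m ν := hLp.2.1
  have hN2 : 2 ≤ N := by omega
  have hz2wit : 2 ≤ 1 + m ∧ ν (1 + m) = false := ⟨by omega, by rw [hPer 1]; exact h1⟩
  have hz2ex : ∃ s, 2 ≤ s ∧ ν s = false := ⟨1 + m, hz2wit⟩
  set t := Nat.find hz2ex with htdef
  obtain ⟨ht2, htf⟩ : 2 ≤ t ∧ ν t = false := Nat.find_spec hz2ex
  have htmin : ∀ s, 2 ≤ s → s < t → ν s = true := by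
    intro s hs2 hst
    by_contra hc
    have hsf : ν s = false := by cases h : ν s <;> simp_all
    have : t ≤ s := Nat.find_le ⟨hs2, hsf⟩
    omega
  have ht_le : t ≤ 1 + m := Nat.find_le hz2wit
  have hteven : t % 2 = 0 := by
    by_contra htodd'
    have htodd : t % 2 = 1 := by omega
    have hall : ∀ n, ν (2 * n) = true := by
      intro n
      induction n using Nat.strong_induction_on with
      | _ n IH =>
        rcases Nat.eq_zero_or_pos n with rfl | hn
        · simpa using h0
        · by_contra hT'
          have hT : ν (2 * n) = false := by cases h : ν (2*n) <;> simp_all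
          have hz1 : 1 ≤ Nat.findGreatest (fun z => ν z = false) (2 * n - 1) :=
            Nat.le_findGreatest (P := fun z => ν z = false) (by omega) h1
          have hzf : ν (Nat.findGreatest (fun z => ν z = false) (2 * n - 1)) = false :=
            Nat.findGreatest_spec (P := fun z => ν z = false) (by omega : 1 ≤ 2*n - 1) h1
          have hz_le : Nat.findGreatest (fun z => ν z = false) (2 * n - 1) ≤ 2 * n - 1 :=
            Nat.findGreatest_le _
          have hz_max : ∀ y, Nat.findGreatest (fun z => ν z = false) (2 * n - 1) < y →
              y ≤ 2 * n - 1 → ν y = true := by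
            intro y hy hy2
            have hny := Nat.findGreatest_is_greatest hy hy2
            cases h : ν y
            · exact absurd h hny
            · rfl
          set z := Nat.findGreatest (fun z => ν z = false) (2 * n - 1) with hzdef
          have hz_odd : z % 2 = 1 := by
            rcases Nat.even_or_odd z with ⟨u, hu⟩ | hzo
            · exfalso
              have hu2 : z = 2 * u := by omega
              have : u < n := by omega
              have := IH u this
              rw [← hu2] at this
              rw [this] at hzf
              simp at hzf
            · rw [Nat.odd_iff] at hzo; exact hzo
          set a := 2 * n - z with hadef
          have ha_odd : a % 2 = 1 := by omega
          have ha1 : 1 ≤ a := by omega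
          set b := t - 1 with hbdef
          have hb_even : b % 2 = 0 := by omega
          have hab : a ≠ b := by omega
          set u := S ν (z - 1) with hudef
          have hu0 : u 0 = true := by
            show ν (z - 1 + 0) = true
            rcases eq_or_lt_of_le hz1 with heq | hz2'
            · rw [Nat.add_zero, ← heq]; simpa using h0
            · have hzm1e : (z - 1) % 2 = 0 := by omega
              have : z - 1 = 2 * ((z-1)/2) := by omega
              rw [Nat.add_zero, this]
              exact IH ((z-1)/2) (by omega)
          have hu1 : u 1 = false := by
            show ν (z - 1 + 1) = false
            rw [show z - 1 + 1 = z by omega]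
            exact hzf
          have humid : ∀ j, 2 ≤ j → j ≤ a → u j = true := by
            intro j hj2 hja
            show ν (z - 1 + j) = true
            exact hz_max _ (by omega) (by omega)
          have hua1 : u (a + 1) = false := by
            show ν (z - 1 + (a + 1)) = false
            rw [show z - 1 + (a+1) = 2*n by omega]
            exact hT
          have hcontr : tlt ν u := by
            rcases Nat.lt_or_ge a b with hableft | habright
            · refine ⟨a + 1, ?_, ?_, ?_⟩
              · intro s hs
                rcases Nat.lt_or_ge s 2 with hs2 | hs2
                · interval_cases s
                  · rw [h0, hu0]
                  · rw [h1, hu1]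
                · rw [htmin s hs2 (by omega), humid s hs2 (by omega)]
              · rw [htmin (a+1) (by omega) (by omega), hua1]
                simp
              · rw [htmin (a+1) (by omega) (by omega)]
                rw [ones_headpattern h0 h1 (fun s hs2 hsp => htmin s hs2 (by omega)) (by omega)]
                simp only [true_iff]
                rw [Nat.odd_iff]
                omega
            · have hba : b < a := by omega
              refine ⟨t, ?_, ?_, ?_⟩
              · intro s hs
                rcases Nat.lt_or_ge s 2 with hs2 | hs2
                · interval_cases s
                  · rw [h0, hu0]
                  · rw [h1, hu1]
                · rw [htmin s hs2 hs, humid s hs2 (by omega)]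
              · rw [htf, humid t (by omega) (by omega)]
                simp
              · rw [htf]
                rw [ones_headpattern h0 h1 (fun s hs2 hsp => htmin s hs2 hsp) (by omega)]
                constructor
                · intro h; simp at h
                · intro h
                  rw [Nat.odd_iff] at h
                  omega
          exact not_tlt_of_tle (hsm (z - 1)) hcontr
    have := hall w0
    rw [this] at hni
    simp at hni
  refine ⟨t, ?_, ?_, ?_⟩
  · intro s hs
    rcases Nat.lt_or_ge s 2 with hs2 | hs2
    · interval_cases s
      · rw [St_zero_eq hN2, h0]
      · rw [St_one_eq hN2, h1]
    · rw [St_mid_eq hs2 (by omega), htmin s hs2 hs]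
  · rw [St_mid_eq ht2 (by omega), htf]
    simp
  · rw [St_mid_eq ht2 (by omega), ones_St hN2 ht2 (by omega)]
    simp only [true_iff]
    rw [Nat.odd_iff]
    omega

end Stmt18

namespace Stmt18

/-! ### arithmetic lemmas about the Sharkovskii relation -/

lemma shark_pos {m k : ℕ} (h : sharkGt m k) : 1 ≤ k ∧ 1 ≤ m := by
  obtain ⟨i, p, j, q, hm, hk, _⟩ := h
  have h1 : 0 < 2 ^ i := Nat.two_pow_pos i
  have h2 : 0 < 2 ^ j := Nat.two_pow_pos j
  constructor
  · rw [hk]; exact Nat.mul_pos h2 (by omega)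
  · rw [hm]; exact Nat.mul_pos h1 (by omega)

lemma shark_one {k : ℕ} (h : sharkGt 1 k) : False := by
  obtain ⟨i, p, j, q, hm, hk, hcase⟩ := h
  have hip : 0 < 2 ^ i := Nat.two_pow_pos i
  have hp : p = 0 := by nlinarith [hm]
  have hi2 : 2 ^ i = 1 := by
    subst hp; simp at hm; omega
  have hi : i = 0 := by
    rcases Nat.eq_zero_or_pos i with h | h
    · exact h
    · exfalso
      have : 2 ^ 1 ≤ 2 ^ i := Nat.pow_le_pow_right (by omega) h
      omega
  rcases hcase with ⟨h1, _, _⟩ | ⟨h1, _, _, _⟩ | ⟨h1, _⟩ | ⟨_, _, h3⟩ <;> omega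

lemma shark_two {k : ℕ} (h : sharkGt 2 k) : k = 1 := by
  obtain ⟨i, p, j, q, hm, hk, hcase⟩ := h
  have hip : 0 < 2 ^ i := Nat.two_pow_pos i
  have hp : p = 0 := by
    by_contra hp
    have : 3 ≤ 2 * p + 1 := by omega
    nlinarith [hm]
  have hi : i = 1 := by
    subst hp
    simp at hm
    rcases Nat.lt_trichotomy i 1 with h | h | h
    · interval_cases i <;> omega
    · exact h
    · exfalso
      have : 2 ^ 2 ≤ 2 ^ i := Nat.pow_le_pow_right (by omega) h
      omega
  rcases hcase with ⟨h1, _, _⟩ | ⟨h1, _, _, _⟩ | ⟨h1, _⟩ | ⟨_, hq, h3⟩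
  · omega
  · omega
  · omega
  · have hj : j = 0 := by omega
    rw [hk, hj, hq]
    norm_num

lemma shark_half {m k : ℕ} (h : sharkGt m k) (hme : m % 2 = 0) (hk1 : k ≠ 1) :
    k % 2 = 0 ∧ sharkGt (m / 2) (k / 2) := by
  obtain ⟨i, p, j, q, hm, hk, hcase⟩ := h
  -- i ≥ 1
  have hi : 1 ≤ i := by
    rcases Nat.eq_zero_or_pos i with h | h
    · subst h; simp at hm; omega
    · exact h
  -- j ≥ 1
  have hj : 1 ≤ j := by
    rcases Nat.eq_zero_or_pos j with h | h
    · exfalso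
      subst h
      simp at hk
      rcases hcase with ⟨h1, h2, h3⟩ | ⟨h1, h2, h3, _⟩ | ⟨h1, h2⟩ | ⟨h1, h2, h3⟩ <;> omega
    · exact h
  obtain ⟨i', rfl⟩ : ∃ i', i = i' + 1 := ⟨i - 1, by omega⟩
  obtain ⟨j', rfl⟩ : ∃ j', j = j' + 1 := ⟨j - 1, by omega⟩
  rw [pow_succ] at hm hk
  have hm2 : m = 2 * (2 ^ i' * (2 * p + 1)) := by rw [hm]; ring
  have hk2 : k = 2 * (2 ^ j' * (2 * q + 1)) := by rw [hk]; ring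
  refine ⟨by omega, i', p, j', q, by omega, by omega, ?_⟩
  rcases hcase with ⟨h1, h2, h3⟩ | ⟨h1, h2, h3, h4⟩ | ⟨h1, h2⟩ | ⟨h1, h2, h3⟩
  · exact Or.inl ⟨h1, h2, by omega⟩
  · exact Or.inr (Or.inl ⟨h1, h2, by omega, h4⟩)
  · exact Or.inr (Or.inr (Or.inl ⟨h1, h2⟩))
  · exact Or.inr (Or.inr (Or.inr ⟨h1, h2, by omega⟩))

/-- if k is odd and ≥ 3 then j = 0, q ≥ 1 forces the second case : m odd less than k -/
lemma shark_odd0 {m k q : ℕ} (h : sharkGt m k) (hkq : k = 2 * q + 1) (hq : 1 ≤ q) :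
    m < k := by
  obtain ⟨i, p, j, q', hm, hk, hcase⟩ := h
  have hj : j = 0 := by
    rcases Nat.eq_zero_or_pos j with h | h
    · exact h
    · exfalso
      obtain ⟨j', rfl⟩ : ∃ j', j = j' + 1 := ⟨j - 1, by omega⟩
      rw [pow_succ] at hk
      have : k = 2 * (2 ^ j' * (2 * q' + 1)) := by rw [hk]; ring
      omega
  subst hj
  simp at hk
  have hq' : q' = q := by omega
  subst hq'
  rcases hcase with ⟨h1, h2, h3⟩ | ⟨h1, h2, h3, h4⟩ | ⟨h1, h2⟩ | ⟨h1, h2, h3⟩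
  · omega
  · subst h3
    simp at hm
    omega
  · omega
  · omega

/-! ### doubling and least periods -/

lemma Dd_zero (e : ℕ → Bool) : Dd e 0 = true := by simp [Dd]

lemma Lp_Dd {c : ℕ} {e : ℕ → Bool} (h : Lp c e) (he : e 0 = true) : Lp (2 * c) (Dd e) := by
  obtain ⟨hc, hPer, hmin⟩ := h
  refine ⟨by omega, ?_, ?_⟩
  · intro n
    rcases Nat.even_or_odd n with ⟨u, hu⟩ | ⟨u, hu⟩
    · rw [show n + 2*c = 2*(u + c) by omega, show n = 2*u by omega, Dd_even, Dd_even]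
    · rw [show n + 2*c = 2*(u + c) + 1 by omega, show n = 2*u+1 by omega, Dd_odd, Dd_odd,
        hPer u]
  · intro s hs0 hsc hPs
    rcases Nat.even_or_odd s with ⟨s', hs'⟩ | ⟨s', hs'⟩
    · -- even s = 2 s' : e would have period s' < c
      have hs2 : s = 2 * s' := by omega
      have hPe : Per s' e := by
        intro n
        have := hPs (2 * n + 1)
        rw [show 2*n+1+s = 2*(n+s')+1 by omega, Dd_odd, Dd_odd] at this
        simpa using this
      exact hmin s' (by omega) (by omega) hPe
    · -- odd s : e is eventually false, contradicting e 0 = true by periodicity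
      have hs2 : s = 2 * s' + 1 := by omega
      have hef : ∀ j, e (j + s') = false := by
        intro j
        have := hPs (2 * j)
        rw [show 2*j + s = 2*(j+s') + 1 by omega, Dd_even, Dd_odd] at this
        cases h : e (j + s')
        · rfl
        · rw [h] at this; simp at this
      have h0' : e (s * c) = e 0 := by
        have := (Per.mul hPer s) 0
        rw [Nat.zero_add] at this
        exact this
      have hge : s' ≤ s * c := by nlinarith
      have hsc' : e (s * c) = false := by
        have := hef (s * c - s')
        rwa [show s*c - s' + s' = s*c by omega] at this
      rw [h0', he] at hsc'
      simp at hsc' 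

lemma undouble_eq {ν : ℕ → Bool} (hD : ∀ n, ν (2 * n) = true) :
    ν = Dd (fun n => !ν (2 * n + 1)) := by
  funext n
  rcases Nat.even_or_odd n with ⟨u, hu⟩ | ⟨u, hu⟩
  · rw [show n = 2*u by omega, Dd_even, hD u]
  · rw [show n = 2*u+1 by omega, Dd_odd]
    simp

lemma m_even_of_ImD {ν : ℕ → Bool} {m : ℕ} (hD : ∀ n, ν (2 * n) = true)
    (h1 : ν 1 = false) (hPer : Per m ν) : m % 2 = 0 := by
  by_contra hmo
  have h1m : ν (1 + m) = false := by rw [hPer 1]; exact h1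
  have : ν (1 + m) = true := by
    rw [show 1 + m = 2 * ((1+m)/2) by omega]
    exact hD _
  rw [this] at h1m
  simp at h1m

lemma Lp_undouble {ν : ℕ → Bool} {r : ℕ} (hD : ∀ n, ν (2 * n) = true)
    (hLp : Lp (2 * r) ν) : Lp r (fun n => !ν (2 * n + 1)) := by
  obtain ⟨hr, hPer, hmin⟩ := hLp
  refine ⟨by omega, ?_, ?_⟩
  · intro n
    simp only []
    rw [show 2*(n+r)+1 = (2*n+1) + 2*r by omega, hPer]
  · intro s hs0 hsr hPs
    apply hmin (2 * s) (by omega) (by omega)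
    intro n
    rcases Nat.even_or_odd n with ⟨u, hu⟩ | ⟨u, hu⟩
    · rw [show n + 2*s = 2*(u+s) by omega, show n = 2*u by omega, hD, hD]
    · have := hPs u
      simp only [] at this
      rw [show n + 2*s = 2*(u+s)+1 by omega, show n = 2*u+1 by omega]
      cases hcc : ν (2*(u+s)+1) <;> cases hdd : ν (2*u+1) <;> simp_all

/-! ### iterated doubling of Stefan sequences -/

def Dj (j : ℕ) (e : ℕ → Bool) : ℕ → Bool := Dd^[j] e

lemma Dj_zero_def (e : ℕ → Bool) : Dj 0 e = e := rfl

lemma Dj_succ (j : ℕ) (e : ℕ → Bool) : Dj (j + 1) e = Dd (Dj j e) :=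
  Function.iterate_succ_apply' Dd j e

lemma Dj_head {e : ℕ → Bool} (he : e 0 = true) (j : ℕ) : Dj j e 0 = true := by
  induction j with
  | zero => exact he
  | succ j ih => rw [Dj_succ]; exact Dd_zero _

lemma Lp_Dj_St {N : ℕ} (hN : 1 ≤ N) (j : ℕ) : Lp (2 ^ j * N) (Dj j (St N)) := by
  induction j with
  | zero => simpa [Dj_zero_def] using Lp_St hN
  | succ j ih =>
    rw [Dj_succ]
    have := Lp_Dd ih (Dj_head (St_eq_true (by simp)) j)
    rwa [show 2 * (2^j * N) = 2^(j+1) * N by ring] at this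

lemma shiftmax_Dd {ξ : ℕ → Bool} (hsm : ∀ n, tle (S ξ n) ξ) (h0 : ξ 0 = true) :
    ∀ n, tle (S (Dd ξ) n) (Dd ξ) := by
  intro n
  have hw0 : Dd ξ 0 = true := Dd_zero _
  have hw1 : Dd ξ 1 = false := by
    have := Dd_odd ξ 0
    simp at this
    rw [show (1:ℕ) = 2*0+1 by omega, Dd_odd, h0]
    simp
  rcases Nat.even_or_odd n with ⟨u, hu⟩ | ⟨u, hu⟩
  · rw [show n = 2*u by omega, S_Dd]
    exact tle_Dd_iff.mpr (hsm u)
  · have hn : n = 2*u+1 := by omega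
    subst hn
    left
    apply head_tlt hw0 hw1
    cases hξ : ξ u
    · right
      constructor
      · show Dd ξ (2*u+1+0) = true
        rw [show 2*u+1+0 = 2*u+1 by omega, Dd_odd, hξ]
        simp
      · show Dd ξ (2*u+1+1) = true
        rw [show 2*u+1+1 = 2*(u+1) by omega, Dd_even]
    · left
      show Dd ξ (2*u+1+0) = false
      rw [show 2*u+1+0 = 2*u+1 by omega, Dd_odd, hξ]
      simp

lemma shiftmax_Dj_St {N : ℕ} (hN : 1 ≤ N) (j : ℕ) :
    ∀ n, tle (S (Dj j (St N)) n) (Dj j (St N)) := by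
  induction j with
  | zero =>
    intro n
    rw [Dj_zero_def]
    rcases eq_or_lt_of_le hN with heq | hlt
    · have : S (St N) n = St N := by
        funext jj
        simp only [S_apply]
        rw [← heq, St_one, St_one]
    -- note : heq : 1 = N
      rw [this]; exact tle_refl _
    · exact shiftmax_St (by omega) n
  | succ j ih =>
    rw [Dj_succ]
    exact shiftmax_Dd ih (Dj_head (St_eq_true (by simp)) j)

end Stmt18

namespace Stmt18

lemma exists_max_tle : ∀ (l : List (ℕ → Bool)), l ≠ [] → ∃ w ∈ l, ∀ v ∈ l, tle v w := by
  intro l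
  induction l with
  | nil => intro h; exact absurd rfl h
  | cons a l ih =>
    intro _
    by_cases hl0 : l = []
    · subst hl0
      refine ⟨a, List.mem_singleton_self a, ?_⟩
      intro v hv
      rw [List.mem_singleton] at hv
      subst hv
      exact tle_refl _
    · obtain ⟨w, hwmem, hwmax⟩ := ih hl0
      by_cases haw : a = w
      · refine ⟨w, List.mem_cons_of_mem a hwmem, ?_⟩
        intro v hv
        rcases List.mem_cons.mp hv with rfl | hv
        · rw [haw]; exact tle_refl _
        · exact hwmax v hv
      · rcases tlt_total haw with h | h
        · refine ⟨w, List.mem_cons_of_mem a hwmem, ?_⟩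
          intro v hv
          rcases List.mem_cons.mp hv with rfl | hv
          · exact Or.inl h
          · exact hwmax v hv
        · refine ⟨a, List.mem_cons_self, ?_⟩
          intro v hv
          rcases List.mem_cons.mp hv with rfl | hv
          · exact tle_refl _
          · exact tle_trans (hwmax v hv) (Or.inl h)

end Stmt18

namespace Stmt18

/-- The combinatorial Sharkovskii theorem for the twisted (unimodal) order. -/
theorem comb : ∀ m, 2 ≤ m → ∀ ν : ℕ → Bool, (∀ n, tle (S ν n) ν) → Lp m ν →
    ∀ k, sharkGt m k → ∃ ζ, Lp k ζ ∧ ζ 0 = true ∧ ∀ n, tle (S ζ n) ν := by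
  intro m
  induction m using Nat.strong_induction_on with
  | _ m IH =>
    intro hm ν hsm hLp k hk
    obtain ⟨hν0, hν1⟩ := SM1 hsm hLp hm
    by_cases hk1 : k = 1
    · subst hk1
      refine ⟨St 1, Lp_St le_rfl, St_one 0, ?_⟩
      intro n
      have hS1 : S (St 1) n = St 1 := by
        funext j; simp only [S_apply]; rw [St_one, St_one]
      rw [hS1]
      exact Or.inl (tlt_allTrue hν0 hν1)
    · by_cases hD : ∀ n, ν (2 * n) = true
      · -- renormalizable case : ν is a doubled sequence
        set μ := fun n => !ν (2 * n + 1) with hμdef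
        have hνD : ν = Dd μ := by rw [hμdef]; exact undouble_eq hD
        have hme : m % 2 = 0 := m_even_of_ImD hD hν1 hLp.2.1
        set r := m / 2 with hrdef
        have hm2 : m = 2 * r := by omega
        have hLp2 : Lp (2 * r) ν := by rw [← hm2]; exact hLp
        have hLpμ : Lp r μ := by rw [hμdef]; exact Lp_undouble hD hLp2
        have hr2 : 2 ≤ r := by
          rcases Nat.lt_or_ge r 2 with h | h
          · exfalso
            have hm2' : m = 2 := by omega
            rw [hm2'] at hk
            exact hk1 (shark_two hk)
          · exact h
        have hsmμ : ∀ n, tle (S μ n) μ := by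
          intro n
          apply tle_Dd_iff.mp
          rw [← S_Dd, ← hνD]
          exact hsm (2 * n)
        obtain ⟨hke, hks⟩ := shark_half hk hme hk1
        obtain ⟨ζ', hLpζ', hζ'0, hdom⟩ := IH r (by omega) hr2 μ hsmμ hLpμ (k / 2) hks
        refine ⟨Dd ζ', ?_, Dd_zero _, ?_⟩
        · have := Lp_Dd hLpζ' hζ'0
          rwa [show 2 * (k / 2) = k by omega] at this
        · intro n
          rcases Nat.even_or_odd n with ⟨u, hu⟩ | ⟨u, hu⟩
          · rw [show n = 2 * u by omega, S_Dd, hνD]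
            exact tle_Dd_iff.mpr (hdom u)
          · left
            apply head_tlt hν0 hν1
            cases hc : ζ' u
            · right
              constructor
              · show Dd ζ' (n + 0) = true
                rw [show n + 0 = 2*u+1 by omega, Dd_odd, hc]; simp
              · show Dd ζ' (n + 1) = true
                rw [show n + 1 = 2*(u+1) by omega, Dd_even]
            · left
              show Dd ζ' (n + 0) = false
              rw [show n + 0 = 2*u+1 by omega, Dd_odd, hc]; simp
      · -- non-renormalizable case
        push_neg at hD
        obtain ⟨w0, hw0'⟩ := hD
        have hw0 : ν (2 * w0) = false := by cases h : ν (2 * w0) <;> simp_all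
        obtain ⟨i, p, j, q, hmeq, hkeq, hcase⟩ := hk
        rcases Nat.eq_zero_or_pos j with hj0 | hj1
        · -- k is odd
          subst hj0
          simp only [pow_zero, one_mul] at hkeq
          have hq1 : 1 ≤ q := by omega
          have hmk : m < k :=
            shark_odd0 ⟨i, p, 0, q, hmeq, (by simpa using hkeq), hcase⟩ hkeq hq1
          have hkodd : Odd k := ⟨q, by omega⟩
          refine ⟨St k, Lp_St (by omega), St_zero_eq (by omega), ?_⟩
          intro n
          apply tle_trans (shiftmax_St (by omega) n)
          exact Or.inl (O4 hsm hLp hm hw0 hkodd (by omega))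
        · -- j ≥ 1
          refine ⟨Dj j (St (2 * q + 1)), ?_, Dj_head (St_eq_true (by simp)) j, ?_⟩
          · rw [hkeq]; exact Lp_Dj_St (by omega) j
          · intro n
            apply tle_trans (shiftmax_Dj_St (by omega) j n)
            obtain ⟨j', rfl⟩ : ∃ j', j = j' + 1 := ⟨j - 1, by omega⟩
            rw [Dj_succ]
            have hO1 : tlt (Dd (Dj j' (St (2 * q + 1)))) (St (2*m+1)) :=
              tlt_Dd_St _ ⟨m, by omega⟩ (by omega)
            have hO4 : tlt (St (2*m+1)) ν := O4 hsm hLp hm hw0 ⟨m, by omega⟩ (by omega)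
            exact Or.inl (tlt_trans hO1 hO4)

end Stmt18

namespace Stmt18

noncomputable def g (β : ℝ) (b : Bool) (t : ℝ) : ℝ := if b then 1/(β-1) - t/β else t/β

noncomputable def A (β : ℝ) : ℕ → (ℕ → Bool) → ℝ
  | 0, _ => 0
  | (N+1), e => g β (e 0) (A β N (S e 1))

lemma A_zero (β : ℝ) (e : ℕ → Bool) : A β 0 e = 0 := rfl

lemma A_succ (β : ℝ) (N : ℕ) (e : ℕ → Bool) : A β (N+1) e = g β (e 0) (A β N (S e 1)) := rfl

open Classical in
noncomputable def xval (β : ℝ) (e : ℕ → Bool) : ℝ :=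
  if h : ∃ a, Filter.Tendsto (fun N => A β N e) Filter.atTop (nhds a) then h.choose else 0

section Analysis

variable {β : ℝ}

lemma g_mem (h1 : 1 < β) (b : Bool) {t : ℝ} (ht0 : 0 ≤ t) (ht1 : t ≤ 1/(β-1)) :
    0 ≤ g β b t ∧ g β b t ≤ 1/(β-1) := by
  have hb : (0:ℝ) < β := by linarith
  have hg : (0:ℝ) < 1/(β-1) := by apply div_pos one_pos; linarith
  have h4 : 0 ≤ t/β := by positivity
  have htβ2 : t / β ≤ (1/(β-1))/β := by gcongr
  have h3 : (1/(β-1))/β ≤ 1/(β-1) := by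
    rw [div_le_iff₀ hb]; nlinarith
  cases b <;> simp only [g, Bool.false_eq_true, if_false, if_true] <;> constructor <;> linarith

lemma g_dist (h1 : 1 < β) (b : Bool) (t s : ℝ) : dist (g β b t) (g β b s) = dist t s / β := by
  have hb : (0:ℝ) < β := by linarith
  have key : ∀ t s : ℝ, |t/β - s/β| = |t - s|/β := by
    intro t s
    rw [div_sub_div_same, abs_div, abs_of_pos hb]
  cases b <;> simp only [g, Bool.false_eq_true, if_false, if_true] <;>
    rw [Real.dist_eq, Real.dist_eq]
  · exact key t s
  · have harr : (1/(β-1) - t/β) - (1/(β-1) - s/β) = s/β - t/β := by ring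
    rw [harr, key s t, abs_sub_comm]

lemma A_mem (h1 : 1 < β) : ∀ N (e : ℕ → Bool), 0 ≤ A β N e ∧ A β N e ≤ 1/(β-1) := by
  intro N
  induction N with
  | zero =>
    intro e
    refine ⟨le_refl 0, ?_⟩
    apply le_of_lt
    apply div_pos one_pos
    linarith
  | succ N ih =>
    intro e
    exact g_mem h1 (e 0) (ih (S e 1)).1 (ih (S e 1)).2

lemma A_dist (h1 : 1 < β) : ∀ N (e : ℕ → Bool),
    dist (A β N e) (A β (N+1) e) ≤ (1/(β-1)) * (1/β)^N := by
  intro N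
  induction N with
  | zero =>
    intro e
    rw [A_zero, A_succ, A_zero]
    have := g_mem h1 (e 0) (le_refl (0:ℝ)) (by apply le_of_lt; apply div_pos one_pos; linarith)
    rw [Real.dist_eq, pow_zero, mul_one, abs_sub_comm, sub_zero, abs_of_nonneg this.1]
    exact this.2
  | succ N ih =>
    intro e
    rw [A_succ, A_succ, g_dist h1]
    have hb : (0:ℝ) < β := by linarith
    have := ih (S e 1)
    calc dist (A β N (S e 1)) (A β (N+1) (S e 1)) / β
        ≤ ((1/(β-1)) * (1/β)^N) / β := by gcongr
      _ = (1/(β-1)) * (1/β)^(N+1) := by ring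

lemma A_cauchy (h1 : 1 < β) (e : ℕ → Bool) : CauchySeq (fun N => A β N e) := by
  apply cauchySeq_of_le_geometric (1/β) (1/(β-1))
  · rw [div_lt_one (by linarith)]; linarith
  · exact fun n => A_dist h1 n e

lemma xval_tendsto (h1 : 1 < β) (e : ℕ → Bool) :
    Filter.Tendsto (fun N => A β N e) Filter.atTop (nhds (xval β e)) := by
  have hex : ∃ a, Filter.Tendsto (fun N => A β N e) Filter.atTop (nhds a) :=
    cauchySeq_tendsto_of_complete (A_cauchy h1 e)
  have hx : xval β e = hex.choose := by
    unfold xval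
    exact dif_pos hex
  rw [hx]
  exact hex.choose_spec

lemma xval_mem (h1 : 1 < β) (e : ℕ → Bool) : 0 ≤ xval β e ∧ xval β e ≤ 1/(β-1) :=
  ⟨ge_of_tendsto' (xval_tendsto h1 e) (fun N => (A_mem h1 N e).1),
   le_of_tendsto' (xval_tendsto h1 e) (fun N => (A_mem h1 N e).2)⟩

lemma xval_rec (h1 : 1 < β) (e : ℕ → Bool) : xval β e = g β (e 0) (xval β (S e 1)) := by
  have t1 : Filter.Tendsto (fun N => A β (N+1) e) Filter.atTop (nhds (xval β e)) :=
    (xval_tendsto h1 e).comp (Filter.tendsto_add_atTop_nat 1)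
  have t2 : Filter.Tendsto (fun N => A β (N+1) e) Filter.atTop
      (nhds (g β (e 0) (xval β (S e 1)))) := by
    simp only [A_succ]
    cases he : e 0 <;> simp only [g, Bool.false_eq_true, if_false, if_true]
    · exact (xval_tendsto h1 (S e 1)).div_const β
    · exact tendsto_const_nhds.sub ((xval_tendsto h1 (S e 1)).div_const β)
  exact tendsto_nhds_unique t1 t2

lemma xval_head_false (h1 : 1 < β) {e : ℕ → Bool} (he : e 0 = false) :
    xval β e = xval β (S e 1) / β := by
  rw [xval_rec h1 e, he]; simp [g]

lemma xval_head_true (h1 : 1 < β) {e : ℕ → Bool} (he : e 0 = true) :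
    xval β e = 1/(β-1) - xval β (S e 1) / β := by
  rw [xval_rec h1 e, he]; simp [g]

lemma xval_head_false_le (h1 : 1 < β) {e : ℕ → Bool} (he : e 0 = false) :
    xval β e ≤ (1/(β-1))/β := by
  rw [xval_head_false h1 he]
  have hb : (0:ℝ) < β := by linarith
  gcongr
  exact (xval_mem h1 (S e 1)).2

lemma xval_head_true_ge (h1 : 1 < β) {e : ℕ → Bool} (he : e 0 = true) :
    1/β ≤ xval β e := by
  rw [xval_head_true h1 he]
  have hb : (0:ℝ) < β := by linarith
  have hle : xval β (S e 1) / β ≤ (1/(β-1))/β := by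
    gcongr
    exact (xval_mem h1 (S e 1)).2
  have hb2 : β ≠ 0 := by intro h; rw [h] at h1; norm_num at h1
  have hb3 : β - 1 ≠ 0 := by intro h; nlinarith [h]
  have hid : 1/(β-1) - (1/(β-1))/β = 1/β := by
    field_simp
  linarith

/-- the sign-unrolling lemma -/
lemma xval_unroll (h1 : 1 < β) :
    ∀ (t : ℕ) (a b : ℕ → Bool), (∀ s, s < t → a s = b s) →
      xval β a - xval β b
        = (-1 : ℝ)^(ones a t) * (1/β)^t * (xval β (S a t) - xval β (S b t)) := by
  intro t
  induction t with
  | zero =>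
    intro a b _
    rw [ones_zero, S_zero, S_zero]
    simp
  | succ t ih =>
    intro a b hag
    have h0 : a 0 = b 0 := hag 0 (by omega)
    have hrec : xval β a - xval β b
        = (-1:ℝ)^(if a 0 then 1 else 0) * (1/β) * (xval β (S a 1) - xval β (S b 1)) := by
      rw [xval_rec h1 a, xval_rec h1 b, ← h0]
      cases ha : a 0 <;> simp only [g, Bool.false_eq_true, if_false, if_true, pow_zero, pow_one]
      · ring
      · ring
    have hih := ih (S a 1) (S b 1) (fun s hs => by
      simp only [S_apply]
      exact hag (1 + s) (by omega))
    rw [hrec, hih, S_S, S_S, ones_shift]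
    rw [pow_add, pow_add]
    have : (1:ℕ) + t = t + 1 := by omega
    rw [this]
    ring

def Adm (β : ℝ) (e : ℕ → Bool) : Prop := ∀ n, xval β (S e n) < 1

lemma Adm_S {e : ℕ → Bool} (h : Adm β e) (n : ℕ) : Adm β (S e n) := by
  intro j
  rw [S_S]
  exact h (n + j)

lemma Adm_head_false (h1 : 1 < β) {e : ℕ → Bool} (hA : Adm β e) (he : e 0 = false) :
    xval β e < 1/β := by
  rw [xval_head_false h1 he]
  have hb : (0:ℝ) < β := by linarith
  exact div_lt_div_of_pos_right (hA 1) hb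

lemma Adm_head_true (h1 : 1 < β) (h2 : β < 2) {e : ℕ → Bool} (hA : Adm β e) (he : e 0 = true) :
    (1/(β-1))/β < xval β e := by
  rw [xval_head_true h1 he]
  have hb : (0:ℝ) < β := by linarith
  have hlt : xval β (S e 1) / β < 1/β := by
    exact div_lt_div_of_pos_right (hA 1) hb
  have hb2 : β ≠ 0 := by intro h; rw [h] at h1; norm_num at h1
  have hb3 : β - 1 ≠ 0 := by intro h; nlinarith [h]
  have hid : 1/(β-1) - 1/β = (1/(β-1))/β := by
    field_simp
    ring
  linarith

/-- one-sided comparison : if e is admissible and ζ < e in the twisted order then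
the values compare strictly. -/
lemma xval_lt_of_tlt (h1 : 1 < β) (h2 : β < 2) {ζ e : ℕ → Bool} (hA : Adm β e)
    (h : tlt ζ e) : xval β ζ < xval β e := by
  obtain ⟨t, hag, hd, hcond⟩ := h
  have hur := xval_unroll h1 t ζ e hag
  have hb : (0:ℝ) < β := by linarith
  have hγ2 : (1:ℝ) < 1/(β-1) := by
    rw [lt_div_iff₀ (by linarith)]; linarith
  have hpow : (0:ℝ) < (1/β)^t := by positivity
  cases hζt : ζ t
  · -- ζ t = false, e t = true, parity even
    have het : e t = true := by cases h : e t <;> simp_all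
    have heven : Even (ones ζ t) := by
      rw [hζt] at hcond
      simp only [Bool.false_eq_true, false_iff] at hcond
      exact Nat.not_odd_iff_even.mp hcond
    have hsign : (-1:ℝ)^(ones ζ t) = 1 := heven.neg_one_pow
    have hζval : xval β (S ζ t) ≤ (1/(β-1))/β :=
      xval_head_false h1 (show (S ζ t) 0 = false by simpa using hζt) ▸
        xval_head_false_le h1 (show (S ζ t) 0 = false by simpa using hζt)
    have heval : (1/(β-1))/β < xval β (S e t) :=
      Adm_head_true h1 h2 (Adm_S hA t) (by simpa using het)
    have : xval β ζ - xval β e < 0 := by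
      rw [hur, hsign, one_mul]
      apply mul_neg_of_pos_of_neg hpow
      linarith
    linarith
  · -- ζ t = true, e t = false, parity odd
    have het : e t = false := by cases h : e t <;> simp_all
    have hodd : Odd (ones ζ t) := by
      rw [hζt] at hcond
      simpa using hcond.mp rfl
    have hsign : (-1:ℝ)^(ones ζ t) = -1 := hodd.neg_one_pow
    have hζval : 1/β ≤ xval β (S ζ t) :=
      xval_head_true_ge h1 (show (S ζ t) 0 = true by simpa using hζt)
    have heval : xval β (S e t) < 1/β :=
      Adm_head_false h1 (Adm_S hA t) (by simpa using het)
    have : xval β ζ - xval β e < 0 := by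
      rw [hur, hsign]
      have hdiffpos : 0 < xval β (S ζ t) - xval β (S e t) := by linarith
      nlinarith
    linarith

lemma xval_le_of_tle (h1 : 1 < β) (h2 : β < 2) {ζ e : ℕ → Bool} (hA : Adm β e)
    (h : tle ζ e) : xval β ζ ≤ xval β e := by
  rcases h with h | rfl
  · exact le_of_lt (xval_lt_of_tlt h1 h2 hA h)
  · exact le_refl _

lemma xval_inj (h1 : 1 < β) (h2 : β < 2) {a b : ℕ → Bool} (hAa : Adm β a) (hAb : Adm β b)
    (h : xval β a = xval β b) : a = b := by
  by_contra hne
  rcases tlt_total hne with hlt | hlt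
  · exact absurd h (ne_of_lt (xval_lt_of_tlt h1 h2 hAb hlt))
  · exact absurd h.symm (ne_of_lt (xval_lt_of_tlt h1 h2 hAa hlt))

end Analysis
end Stmt18

namespace Stmt18

section Dynamics

variable {β : ℝ}

lemma Cset_right (h1 : 1 < β) : 1/(β*(β-1)) = (1/(β-1))/β := by
  rw [div_div, mul_comm]

lemma Tmap_step (h1 : 1 < β) (h2 : β < 2) {e : ℕ → Bool} (hA : Adm β e) :
    Tmap β (xval β e) = xval β (S e 1) ∧ xval β e ∉ Cset β := by
  have hb : (0:ℝ) < β := by linarith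
  have hb2 : β ≠ 0 := by linarith
  have hb3 : β - 1 ≠ 0 := by intro h; nlinarith [h]
  have hγ2 : (1:ℝ) < 1/(β-1) := by
    rw [lt_div_iff₀ (by linarith)]; linarith
  cases he : e 0
  · have hv : xval β e < 1/β := Adm_head_false h1 hA he
    have hveq : xval β e = xval β (S e 1)/β := xval_head_false h1 he
    constructor
    · show (if xval β e < 1/β then β * xval β e else _) = _
      rw [if_pos hv, hveq]
      field_simp
    · intro hmem
      have hl : 1/β ≤ xval β e := hmem.1
      linarith
  · have hv : (1/(β-1))/β < xval β e := Adm_head_true h1 h2 hA he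
    have hineq1 : 1/β < (1/(β-1))/β := div_lt_div_of_pos_right hγ2 hb
    have hnot1 : ¬ (xval β e < 1/β) := by linarith
    have hnot2 : ¬ (xval β e ≤ 1/(β*(β-1))) := by
      rw [Cset_right h1]; linarith
    constructor
    · show (if xval β e < 1/β then β * xval β e else
        if xval β e ≤ 1/(β*(β-1)) then 1 else β/(β-1) - β * xval β e) = _
      rw [if_neg hnot1, if_neg hnot2, xval_head_true h1 he]
      field_simp
      ring
    · intro hmem
      have hr : xval β e ≤ 1/(β*(β-1)) := hmem.2
      exact hnot2 hr

lemma Tmap_iter (h1 : 1 < β) (h2 : β < 2) {e : ℕ → Bool} (hA : Adm β e) :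
    ∀ j, (Tmap β)^[j] (xval β e) = xval β (S e j) := by
  intro j
  induction j with
  | zero => rw [S_zero]; rfl
  | succ j ih =>
    rw [Function.iterate_succ_apply', ih, (Tmap_step h1 h2 (Adm_S hA j)).1, S_S]

theorem stmt18_main (β : ℝ) (hβ : β ∈ Set.Ioo (1 : ℝ) 2) (m : ℕ) (hm : 1 ≤ m)
    (x : ℝ) (hx : x ∈ Iset β)
    (hfix : (Tmap β)^[m] x = x) (hmin : ∀ j, 1 ≤ j → j < m → (Tmap β)^[j] x ≠ x)
    (hC : ∀ j, j < m → (Tmap β)^[j] x ∉ Cset β) :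
    ∀ k, sharkGt m k → ∃ y ∈ Iset β, (Tmap β)^[k] y = y ∧
      (∀ j, 1 ≤ j → j < k → (Tmap β)^[j] y ≠ y) ∧
      ∀ j, j < k → (Tmap β)^[j] y ∉ Cset β := by
  obtain ⟨h1, h2⟩ := hβ
  intro k hk
  rcases eq_or_lt_of_le hm with hm1 | hm2'
  · exact absurd hk (by rw [← hm1]; exact fun h => shark_one h)
  have hm2 : 2 ≤ m := hm2'
  have hb : (0:ℝ) < β := by linarith
  have hb2 : β ≠ 0 := by linarith
  have hb3 : β - 1 ≠ 0 := by intro h; nlinarith [h]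
  have hγpos : (0:ℝ) < 1/(β-1) := by apply div_pos one_pos; linarith
  have hγ2 : (1:ℝ) < 1/(β-1) := by rw [lt_div_iff₀ (by linarith)]; linarith
  set xo : ℕ → ℝ := fun n => (Tmap β)^[n] x with hxodef
  set e : ℕ → Bool := fun n => !(decide (xo n < 1/β)) with hedef
  have he_false : ∀ n, e n = false ↔ xo n < 1/β := by
    intro n
    rw [hedef]
    simp
  have he_true : ∀ n, e n = true ↔ ¬ (xo n < 1/β) := by
    intro n
    rw [hedef]
    simp
  -- the orbit stays in I
  have hTI : ∀ v, v ∈ Iset β → Tmap β v ∈ Iset β := by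
    intro v hv
    obtain ⟨hv0, hv1⟩ := hv
    show Tmap β v ∈ Set.Icc 0 (1/(β-1))
    rw [Set.mem_Icc]
    unfold Tmap
    split_ifs with hc1 hc2
    · constructor
      · positivity
      · have : β * v < 1 := by
          rw [lt_div_iff₀ hb] at hc1
          linarith [hc1]
        linarith
    · constructor
      · norm_num
      · linarith
    · push_neg at hc1 hc2
      rw [Cset_right h1] at hc2
      constructor
      · have hβγ : β / (β-1) = β * (1/(β-1)) := by ring
        nlinarith [hv1]
      · have hkey : β * ((1/(β-1))/β) = 1/(β-1) := by field_simp <;> ring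
        have h5 : β * ((1/(β-1))/β) < β * v := by gcongr
        have hid : β/(β-1) = 1 + 1/(β-1) := by field_simp <;> ring
        linarith
  have hI : ∀ n, xo n ∈ Iset β := by
    intro n
    induction n with
    | zero => exact hx
    | succ n ih =>
      show (Tmap β)^[n+1] x ∈ Iset β
      rw [Function.iterate_succ_apply']
      exact hTI _ ih
  -- periodicity of the orbit
  have hper : ∀ n, xo (n + m) = xo n := by
    intro n
    show (Tmap β)^[n + m] x = (Tmap β)^[n] x
    rw [Function.iterate_add_apply, hfix]
  have hmul : ∀ c r, xo (r + c * m) = xo r := by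
    intro c
    induction c with
    | zero => intro r; simp
    | succ c ih =>
      intro r
      rw [show r + (c+1)*m = (r + c*m) + m by ring, hper, ih]
  have hxo_mod : ∀ n, xo n = xo (n % m) := by
    intro n
    have hq : n % m + (n / m) * m = n := by
      rw [Nat.mul_comm]
      exact Nat.mod_add_div n m
    conv_lhs => rw [show n = n % m + (n / m) * m by omega]
    exact hmul (n/m) (n%m)
  have hCall : ∀ n, xo n ∉ Cset β := by
    intro n
    rw [hxo_mod]
    exact hC (n % m) (Nat.mod_lt _ (by omega))
  -- the recurrence
  have hsucc : ∀ n, xo (n+1) = Tmap β (xo n) := by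
    intro n
    show (Tmap β)^[n+1] x = _
    rw [Function.iterate_succ_apply']
  have hbig : ∀ n, ¬ (xo n < 1/β) → 1/(β*(β-1)) < xo n := by
    intro n hn
    have hnc := hCall n
    by_contra hle
    push_neg at hle
    exact hnc ⟨by linarith, hle⟩
  have hrec : ∀ n, xo n = g β (e n) (xo (n+1)) := by
    intro n
    by_cases hn : xo n < 1/β
    · have hef : e n = false := (he_false n).mpr hn
      rw [hef]
      show xo n = xo (n+1)/β
      rw [hsucc n]
      show xo n = (if xo n < 1/β then β * xo n else _)/β
      rw [if_pos hn]
      field_simp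
    · have het : e n = true := (he_true n).mpr hn
      have hgt := hbig n hn
      rw [het]
      show xo n = 1/(β-1) - xo (n+1)/β
      rw [hsucc n]
      show xo n = 1/(β-1) - (if xo n < 1/β then β * xo n else
        if xo n ≤ 1/(β*(β-1)) then 1 else β/(β-1) - β * xo n)/β
      rw [if_neg hn, if_neg (not_le.mpr hgt)]
      field_simp
      ring
  -- approximation and identification of xval with the orbit
  have hApprox : ∀ N n, |xo n - A β N (S e n)| ≤ (1/(β-1)) * (1/β)^N := by
    intro N
    induction N with
    | zero =>
      intro n
      rw [A_zero, pow_zero, mul_one, sub_zero, abs_of_nonneg (hI n).1]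
      exact (hI n).2
    | succ N ih =>
      intro n
      rw [A_succ]
      have hS0 : (S e n) 0 = e n := by simp [S_apply]
      have hSS : S (S e n) 1 = S e (n+1) := S_S e n 1
      rw [hS0, hSS]
      have heq : |xo n - g β (e n) (A β N (S e (n+1)))|
          = |xo (n+1) - A β N (S e (n+1))| / β := by
        conv_lhs => rw [hrec n]
        rw [← Real.dist_eq, ← Real.dist_eq, g_dist h1]
      rw [heq]
      calc |xo (n+1) - A β N (S e (n+1))| / β
          ≤ ((1/(β-1)) * (1/β)^N)/β := by gcongr; exact ih (n+1)
        _ = (1/(β-1)) * (1/β)^(N+1) := by ring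
  have hxeq : ∀ n, xval β (S e n) = xo n := by
    intro n
    have hz : Filter.Tendsto (fun N : ℕ => (1/(β-1)) * (1/β)^N) Filter.atTop (nhds 0) := by
      have := tendsto_pow_atTop_nhds_zero_of_lt_one
        (by positivity : (0:ℝ) ≤ 1/β) (by rw [div_lt_one hb]; linarith)
      have h' := this.const_mul (1/(β-1))
      simpa using h'
    have htend2 : Filter.Tendsto (fun N => A β N (S e n)) Filter.atTop (nhds (xo n)) := by
      rw [tendsto_iff_dist_tendsto_zero]
      refine squeeze_zero (fun N => dist_nonneg) (fun N => ?_) hz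
      rw [dist_comm, Real.dist_eq]
      exact hApprox N n
    exact tendsto_nhds_unique (xval_tendsto h1 (S e n)) htend2
  -- all orbit values are < 1
  have hlt1 : ∀ n, xo (n+1) < 1 := by
    intro n
    rw [hsucc n]
    by_cases hn : xo n < 1/β
    · show (if xo n < 1/β then β * xo n else _) < 1
      rw [if_pos hn]
      rw [lt_div_iff₀ hb] at hn
      linarith
    · have hgt := hbig n hn
      show (if xo n < 1/β then β * xo n else
        if xo n ≤ 1/(β*(β-1)) then 1 else β/(β-1) - β * xo n) < 1
      rw [if_neg hn, if_neg (not_le.mpr hgt)]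
      rw [Cset_right h1] at hgt
      have hkey : β * ((1/(β-1))/β) = 1/(β-1) := by field_simp <;> ring
      have h5 : β * ((1/(β-1))/β) < β * xo n := by gcongr
      have hid : β/(β-1) = 1 + 1/(β-1) := by field_simp <;> ring
      linarith
  have hltall : ∀ n, xo n < 1 := by
    intro n
    cases n with
    | zero =>
      have : xo 0 = xo ((m-1) + 1) := by
        conv_lhs => rw [← hper 0]
        congr 1
        omega
      rw [this]
      exact hlt1 (m-1)
    | succ n => exact hlt1 n
  have hAdm : Adm β e := fun n => by rw [hxeq]; exact hltall n
  -- e has least period m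
  have hPer : Per m e := by
    intro n
    have hxp : xo (n + m) = xo n := hper n
    cases hcc : e n
    · exact (he_false (n+m)).mpr (by rw [hxp]; exact (he_false n).mp hcc)
    · exact (he_true (n+m)).mpr (by rw [hxp]; exact (he_true n).mp hcc)
  have hLpe : Lp m e := by
    refine ⟨by omega, hPer, ?_⟩
    intro s hs0 hsm hPs
    have hSs : S e s = e := by
      funext j
      show e (s + j) = e j
      rw [Nat.add_comm]
      exact hPs j
    have : xval β (S e s) = xval β (S e 0) := by rw [hSs, S_zero]
    rw [hxeq, hxeq] at this
    exact hmin s hs0 hsm this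
  -- pick the maximal shift
  have hlist : ((List.range m).map (S e)) ≠ [] := by
    simp
    omega
  obtain ⟨w, hwmem, hwmax⟩ := exists_max_tle ((List.range m).map (S e)) hlist
  obtain ⟨n₀, hn₀m, hn₀⟩ : ∃ n₀, n₀ < m ∧ S e n₀ = w := by
    rw [List.mem_map] at hwmem
    obtain ⟨a, ha, haeq⟩ := hwmem
    exact ⟨a, List.mem_range.mp ha, haeq⟩
  have hS_mod : ∀ a, S e a = S e (a % m) := by
    intro a
    funext j
    show e (a + j) = e (a % m + j)
    have hq : a % m + (a / m) * m = a := by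
      rw [Nat.mul_comm]
      exact Nat.mod_add_div a m
    have harith : a + j = (a % m + j) + (a / m) * m := by omega
    rw [harith]
    exact (Per.mul hPer (a/m)) (a % m + j)
  have hmemS : ∀ a, a < m → S e a ∈ (List.range m).map (S e) := by
    intro a ha
    rw [List.mem_map]
    exact ⟨a, List.mem_range.mpr ha, rfl⟩
  set ν := S e n₀ with hνdef
  have hsmν : ∀ n, tle (S ν n) ν := by
    intro n
    rw [hνdef, S_S, hS_mod (n₀ + n), ← hνdef, hn₀]
    exact hwmax _ (hmemS _ (Nat.mod_lt _ (by omega)))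
  have hLpν : Lp m ν := by
    refine ⟨by omega, Per.S hPer n₀, ?_⟩
    intro s hs0 hsm hPs
    apply hLpe.2.2 s hs0 hsm
    have hback : S ν (m - n₀) = e := by
      rw [hνdef, S_S, show n₀ + (m - n₀) = m by omega, hS_mod m, Nat.mod_self, S_zero]
    rw [← hback]
    exact Per.S hPs (m - n₀)
  have hAdmν : Adm β ν := Adm_S hAdm n₀
  have hν_lt1 : xval β ν < 1 := by
    rw [hνdef, hxeq]
    exact hltall n₀
  -- apply the combinatorial theorem
  obtain ⟨ζ, hLpζ, hζ0, hdom⟩ := comb m hm2 ν hsmν hLpν k hk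
  have hAdmζ : Adm β ζ := by
    intro n
    rcases hdom n with h | heq
    · exact lt_trans (xval_lt_of_tlt h1 h2 hAdmν h) hν_lt1
    · rw [heq]; exact hν_lt1
  refine ⟨xval β ζ, ?_, ?_, ?_, ?_⟩
  · exact Set.mem_Icc.mpr ⟨(xval_mem h1 ζ).1, (xval_mem h1 ζ).2⟩
  · rw [Tmap_iter h1 h2 hAdmζ k]
    congr 1
    funext j
    show ζ (k + j) = ζ j
    rw [Nat.add_comm]
    exact hLpζ.2.1 j
  · intro j hj1 hjk heq'
    rw [Tmap_iter h1 h2 hAdmζ j] at heq'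
    have hSeq : S ζ j = ζ := xval_inj h1 h2 (Adm_S hAdmζ j) hAdmζ heq'
    apply hLpζ.2.2 j hj1 hjk
    intro n
    rw [Nat.add_comm]
    exact congrFun hSeq n
  · intro j hjk
    rw [Tmap_iter h1 h2 hAdmζ j]
    exact (Tmap_step h1 h2 (Adm_S hAdmζ j)).2

end Dynamics
end Stmt18


/-- Sharkovskii's theorem for L-R cycles of the trapezoidal map: if T_β has an
L-R m-cycle, then it has an L-R k-cycle for any k with m ▷ k. -/
theorem stmt18 (β : ℝ) (hβ : β ∈ Set.Ioo (1 : ℝ) 2) (m : ℕ) (hm : 1 ≤ m)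
    (x : ℝ) (hx : x ∈ Iset β)
    (hfix : (Tmap β)^[m] x = x) (hmin : ∀ j, 1 ≤ j → j < m → (Tmap β)^[j] x ≠ x)
    (hC : ∀ j, j < m → (Tmap β)^[j] x ∉ Cset β) :
    ∀ k, sharkGt m k → ∃ y ∈ Iset β, (Tmap β)^[k] y = y ∧
      (∀ j, 1 ≤ j → j < k → (Tmap β)^[j] y ≠ y) ∧
      ∀ j, j < k → (Tmap β)^[j] y ∉ Cset β :=
  Stmt18.stmt18_main β hβ m hm x hx hfix hmin hC
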